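/- Let φ(x) = (1/√(2π))·e^{−x²/2} denote the standard Gaussian density and Φ(x) = ∫_{−∞}^x φ(u) du the standard Gaussian cumulative distribution function. Then for all σ > 0, b > 0, and β ∈ ℝ, ∫_0^∞ φ(t/σ)·Φ(βt/b) dt = (σ/(2π))·(π/2 + arctan(βσ/b)). -/

import Mathlib

/-- The standard Gaussian density `φ(x) = (1/√(2π)) e^{-x²/2}`. -/
noncomputable def stdGaussPDF (x : ℝ) : ℝ :=
  (1 / Real.sqrt (2 * Real.pi)) * Real.exp (-x ^ 2 / 2)

/-- The standard Gaussian cumulative distribution function `Φ(x) = ∫_{-∞}^x φ(u) du`. -/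
noncomputable def stdGaussCDF (x : ℝ) : ℝ := ∫ u in Set.Iic x, stdGaussPDF u

open MeasureTheory Real Set

lemma integrable_phi : Integrable stdGaussPDF := by
  unfold stdGaussPDF
  apply Integrable.const_mul
  have h : ∀ x : ℝ, Real.exp (-x ^ 2 / 2) = Real.exp (-(1/2 : ℝ) * x ^ 2) := by
    intro x; ring_nf
  simp only [h]
  exact integrable_exp_neg_mul_sq (by norm_num)

lemma radial : ∫ r in Ioi (0:ℝ), r * Real.exp (-r ^ 2 / 2) = 1 := by
  have A : ∀ x : ℝ, HasDerivAt (fun y : ℝ => -Real.exp (-y ^ 2 / 2))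
      (x * Real.exp (-x ^ 2 / 2)) x := by
    intro x
    have h1 : HasDerivAt (fun y : ℝ => -y ^ 2 / 2) (-x) x := by
      have : HasDerivAt (fun y : ℝ => -(1/2:ℝ) * y ^ 2) (-(1/2) * (((2:ℕ):ℝ) * x ^ (2 - 1))) x :=
        (hasDerivAt_pow 2 x).const_mul (-(1/2) : ℝ)
      convert this using 1
      · ext y; ring
      · push_cast; ring
    have : HasDerivAt (fun y : ℝ => -Real.exp (-y ^ 2 / 2)) (-(Real.exp (-x ^ 2 / 2) * -x)) x :=
      (h1.exp).neg
    convert this using 1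
    ring
  have B : Filter.Tendsto (fun y : ℝ => -Real.exp (-y ^ 2 / 2)) Filter.atTop (nhds 0) := by
    rw [show (0:ℝ) = -0 by ring]
    apply Filter.Tendsto.neg
    apply Real.tendsto_exp_atBot.comp
    have : ∀ y : ℝ, -y ^ 2 / 2 = -(1/2 : ℝ) * y ^ 2 := fun y => by ring
    simp only [this]
    exact (Filter.tendsto_pow_atTop two_ne_zero).const_mul_atTop_of_neg (by norm_num)
  have hint : IntegrableOn (fun x : ℝ => x * Real.exp (-x ^ 2 / 2)) (Ioi 0) := by
    have h : ∀ x : ℝ, x * Real.exp (-x ^ 2 / 2) = x * Real.exp (-(1/2 : ℝ) * x ^ 2) := by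
      intro x; ring_nf
    simp only [h]
    exact (integrable_mul_exp_neg_mul_sq (by norm_num)).integrableOn
  have := integral_Ioi_of_hasDerivAt_of_tendsto' (fun x _ => A x) hint B
  rw [this]; norm_num

lemma key (c : ℝ) :
    ∫ x in Ioi (0:ℝ), stdGaussPDF x * stdGaussCDF (c * x)
      = (2 * π)⁻¹ * (π / 2 + Real.arctan c) := by
  set S : Set (ℝ × ℝ) := {p | 0 < p.1 ∧ p.2 ≤ c * p.1} with hSdef
  set f : ℝ × ℝ → ℝ := fun p => stdGaussPDF p.1 * stdGaussPDF p.2 with hfdef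
  have hS : MeasurableSet S := by
    apply MeasurableSet.inter
    · exact measurableSet_lt measurable_const measurable_fst
    · exact measurableSet_le measurable_snd (measurable_fst.const_mul c)
  have hf : Integrable f := by
    rw [hfdef, Measure.volume_eq_prod ℝ ℝ]
    exact integrable_phi.mul_prod integrable_phi
  have hG : Integrable (S.indicator f) := hf.indicator hS
  -- Step A
  have stepA : ∫ x in Ioi (0:ℝ), stdGaussPDF x * stdGaussCDF (c * x) = ∫ p, S.indicator f p := by
    have h1 : ∫ p, S.indicator f p = ∫ x, ∫ u, S.indicator f (x, u) := by
      rw [Measure.volume_eq_prod ℝ ℝ] at hG ⊢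
      exact (MeasureTheory.integral_prod _ hG)
    rw [h1]
    have h2 : ∀ x : ℝ, (∫ u, S.indicator f (x, u))
        = (Ioi (0:ℝ)).indicator (fun x => stdGaussPDF x * stdGaussCDF (c * x)) x := by
      intro x
      by_cases hx : 0 < x
      · have heq : (fun u => S.indicator f (x, u))
            = (Iic (c * x)).indicator (fun u => stdGaussPDF x * stdGaussPDF u) := by
          funext u
          by_cases hu : u ≤ c * x
          · have hmem' : (x, u) ∈ S := ⟨hx, hu⟩
            rw [Set.indicator_of_mem hmem' f]
            exact (Set.indicator_of_mem (show u ∈ Iic (c * x) from hu) (fun u => stdGaussPDF x * stdGaussPDF u)).symm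
          · have hnot : (x, u) ∉ S := fun h => hu h.2
            rw [Set.indicator_of_notMem hnot f]
            exact (Set.indicator_of_notMem (show u ∉ Iic (c * x) from hu) (fun u => stdGaussPDF x * stdGaussPDF u)).symm
        rw [heq, MeasureTheory.integral_indicator measurableSet_Iic,
          Set.indicator_of_mem (by exact hx), MeasureTheory.integral_const_mul _ _]
        rfl
      · rw [Set.indicator_of_notMem (by simpa using hx)]
        have heq : (fun u => S.indicator f (x, u)) = fun _ => (0:ℝ) := by
          funext u
          exact Set.indicator_of_notMem (fun h => hx h.1) _
        rw [heq, integral_zero]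
    simp only [h2]
    rw [MeasureTheory.integral_indicator measurableSet_Ioi]
  rw [stepA]
  -- Step B : polar coordinates
  rw [← integral_comp_polarCoord_symm]
  have htarget : polarCoord.target = Ioi (0:ℝ) ×ˢ Ioo (-π) π := rfl
  rw [htarget]
  have hcongr : ∀ p ∈ Ioi (0:ℝ) ×ˢ Ioo (-π) π,
      p.1 • S.indicator f (polarCoord.symm p)
        = (fun r : ℝ => r * Real.exp (-r ^ 2 / 2) * (2 * π)⁻¹) p.1
          * (Ioc (-(π/2)) (Real.arctan c)).indicator (fun _ => (1:ℝ)) p.2 := by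
    rintro ⟨r, θ⟩ ⟨hr, hθ⟩
    simp only [mem_Ioi] at hr
    simp only [mem_Ioo] at hθ
    have hsymm : polarCoord.symm (r, θ) = (r * Real.cos θ, r * Real.sin θ) := rfl
    rw [hsymm]
    have hsqrt : (1 / Real.sqrt (2 * π)) * (1 / Real.sqrt (2 * π)) = (2 * π)⁻¹ := by
      rw [div_mul_div_comm, one_mul, Real.mul_self_sqrt (by positivity)]
      exact one_div _
    by_cases hmem : θ ∈ Ioc (-(π/2)) (Real.arctan c)
    · obtain ⟨h1, h2⟩ := hmem
      have hθlt : θ < π / 2 := lt_of_le_of_lt h2 (Real.arctan_lt_pi_div_two c)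
      have hcos : 0 < Real.cos θ := Real.cos_pos_of_mem_Ioo ⟨h1, hθlt⟩
      have htan : Real.tan θ ≤ c := by
        rcases eq_or_lt_of_le h2 with h | h
        · rw [h, Real.tan_arctan]
        · have := Real.strictMonoOn_tan ⟨h1, hθlt⟩
            ⟨Real.neg_pi_div_two_lt_arctan c, Real.arctan_lt_pi_div_two c⟩ h
          rw [Real.tan_arctan] at this
          exact this.le
      have hsin : Real.sin θ ≤ c * Real.cos θ := by
        have := mul_le_mul_of_nonneg_right htan hcos.le
        rwa [Real.tan_eq_sin_div_cos, div_mul_cancel₀ _ hcos.ne'] at this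
      have hmemS : (r * Real.cos θ, r * Real.sin θ) ∈ S := by
        constructor
        · exact mul_pos hr hcos
        · calc r * Real.sin θ ≤ r * (c * Real.cos θ) :=
                mul_le_mul_of_nonneg_left hsin hr.le
            _ = c * (r * Real.cos θ) := by ring
      rw [Set.indicator_of_mem hmemS, Set.indicator_of_mem (by exact ⟨h1, h2⟩)]
      have hexp : Real.exp (-(r * Real.cos θ) ^ 2 / 2) * Real.exp (-(r * Real.sin θ) ^ 2 / 2)
          = Real.exp (-r ^ 2 / 2) := by
        rw [← Real.exp_add]
        congr 1
        nlinarith [Real.sin_sq_add_cos_sq θ]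
      show r * (stdGaussPDF (r * Real.cos θ) * stdGaussPDF (r * Real.sin θ)) = _
      unfold stdGaussPDF
      calc r * ((1 / Real.sqrt (2 * π)) * Real.exp (-(r * Real.cos θ) ^ 2 / 2)
              * ((1 / Real.sqrt (2 * π)) * Real.exp (-(r * Real.sin θ) ^ 2 / 2)))
          = r * (((1 / Real.sqrt (2 * π)) * (1 / Real.sqrt (2 * π)))
              * (Real.exp (-(r * Real.cos θ) ^ 2 / 2) * Real.exp (-(r * Real.sin θ) ^ 2 / 2))) := by
            ring
        _ = r * ((2 * π)⁻¹ * Real.exp (-r ^ 2 / 2)) := by rw [hsqrt, hexp]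
        _ = r * Real.exp (-r ^ 2 / 2) * (2 * π)⁻¹ * 1 := by ring
    · have hnotS : (r * Real.cos θ, r * Real.sin θ) ∉ S := by
        rintro ⟨hpos, hle⟩
        replace hpos : 0 < r * Real.cos θ := hpos
        replace hle : r * Real.sin θ ≤ c * (r * Real.cos θ) := hle
        have hcos : 0 < Real.cos θ := by
          by_contra hcon
          push_neg at hcon
          nlinarith
        have hθ2 : -(π/2) < θ ∧ θ < π / 2 := by
          constructor
          · by_contra hcon
            push_neg at hcon
            have : Real.cos (-θ) ≤ 0 :=
              Real.cos_nonpos_of_pi_div_two_le_of_le (by linarith) (by linarith [hθ.1])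
            rw [Real.cos_neg] at this
            linarith
          · by_contra hcon
            push_neg at hcon
            have : Real.cos θ ≤ 0 :=
              Real.cos_nonpos_of_pi_div_two_le_of_le (by linarith)
                (by linarith [hθ.2, Real.pi_pos])
            linarith
        have hgt : Real.arctan c < θ := by
          by_contra hcon
          push_neg at hcon
          exact hmem ⟨hθ2.1, hcon⟩
        have htan : c < Real.tan θ := by
          have := Real.strictMonoOn_tan
            ⟨Real.neg_pi_div_two_lt_arctan c, Real.arctan_lt_pi_div_two c⟩ hθ2 hgt
          rwa [Real.tan_arctan] at this
        have hsin : c * Real.cos θ < Real.sin θ := by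
          have := mul_lt_mul_of_pos_right htan hcos
          rwa [Real.tan_eq_sin_div_cos, div_mul_cancel₀ _ hcos.ne'] at this
        have : c * (r * Real.cos θ) < r * Real.sin θ := by nlinarith
        linarith
      rw [Set.indicator_of_notMem hnotS, Set.indicator_of_notMem hmem]
      simp
  rw [MeasureTheory.setIntegral_congr_fun (measurableSet_Ioi.prod measurableSet_Ioo) hcongr]
  rw [Measure.volume_eq_prod ℝ ℝ,
    MeasureTheory.setIntegral_prod_mul (fun r : ℝ => r * Real.exp (-r ^ 2 / 2) * (2 * π)⁻¹)
      ((Ioc (-(π/2)) (Real.arctan c)).indicator (fun _ => (1:ℝ))) (Ioi 0) (Ioo (-π) π)]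
  have hrad : ∫ r in Ioi (0:ℝ), r * Real.exp (-r ^ 2 / 2) * (2 * π)⁻¹ = (2 * π)⁻¹ := by
    rw [MeasureTheory.integral_mul_const, radial, one_mul]
  have hang : ∫ θ in Ioo (-π) π, (Ioc (-(π/2)) (Real.arctan c)).indicator (fun _ => (1:ℝ)) θ
      = π / 2 + Real.arctan c := by
    rw [MeasureTheory.setIntegral_indicator measurableSet_Ioc]
    have hinter : Ioo (-π) π ∩ Ioc (-(π/2)) (Real.arctan c) = Ioc (-(π/2)) (Real.arctan c) := by
      apply Set.inter_eq_right.mpr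
      intro y hy
      constructor
      · linarith [hy.1, Real.pi_pos]
      · exact lt_trans (lt_of_le_of_lt hy.2 (Real.arctan_lt_pi_div_two c)) (by linarith [Real.pi_pos])
    rw [hinter]
    simp only [MeasureTheory.integral_const, smul_eq_mul, mul_one]
    rw [measureReal_restrict_apply_univ, Real.volume_real_Ioc,
      max_eq_left (by linarith [Real.neg_pi_div_two_lt_arctan c])]
    ring
  rw [hrad, hang]

/-- For all `σ > 0`, `b > 0` and `β ∈ ℝ`,
`∫_0^∞ φ(t/σ) Φ(βt/b) dt = (σ/(2π)) (π/2 + arctan(βσ/b))`. -/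
theorem integral_gaussPDF_mul_gaussCDF (σ b β : ℝ) (hσ : 0 < σ) (hb : 0 < b) :
    ∫ t in Set.Ioi (0 : ℝ), stdGaussPDF (t / σ) * stdGaussCDF (β * t / b)
      = σ / (2 * Real.pi) * (Real.pi / 2 + Real.arctan (β * σ / b)) := by
  have h1 : ∀ t : ℝ, stdGaussPDF (t / σ) * stdGaussCDF (β * t / b)
      = (fun x => stdGaussPDF x * stdGaussCDF (β * σ / b * x)) (σ⁻¹ * t) := by
    intro t
    show _ = stdGaussPDF (σ⁻¹ * t) * stdGaussCDF (β * σ / b * (σ⁻¹ * t))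
    congr 1
    · rw [div_eq_inv_mul]
    · congr 1
      field_simp
  calc ∫ t in Set.Ioi (0:ℝ), stdGaussPDF (t / σ) * stdGaussCDF (β * t / b)
      = ∫ t in Set.Ioi (0:ℝ),
          (fun x => stdGaussPDF x * stdGaussCDF (β * σ / b * x)) (σ⁻¹ * t) := by
        apply MeasureTheory.setIntegral_congr_fun measurableSet_Ioi
        intro t _
        exact h1 t
    _ = (σ⁻¹)⁻¹ • ∫ x in Set.Ioi (σ⁻¹ * 0),
          stdGaussPDF x * stdGaussCDF (β * σ / b * x) :=
        integral_comp_mul_left_Ioi (fun x => stdGaussPDF x * stdGaussCDF (β * σ / b * x)) 0 (inv_pos.mpr hσ)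
    _ = σ / (2 * Real.pi) * (Real.pi / 2 + Real.arctan (β * σ / b)) := by
        rw [mul_zero, inv_inv, key (β * σ / b), smul_eq_mul, div_eq_mul_inv]
        ring
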